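/- The subshift of the period-doubling (Toeplitz) substitution σ_T : 0 ↦ 01, 1 ↦ 00 is not balanced on any letter (and hence not balanced on factors of any length). -/

import Mathlib

open Filter Topology MeasureTheory

namespace Balance

variable {A : Type*}

/-- number of (possibly overlapping) occurrences of `v` as a factor of `w` -/
def occ [DecidableEq A] (v w : List A) : ℕ :=
  ((List.range (w.length + 1)).filter (fun i => v <+: w.drop i)).length

/-- the factor of the bi-infinite word `u` starting at position `i`, of length `n` -/
def factorAt (u : ℤ → A) (i : ℤ) (n : ℕ) : List A :=
  (List.range n).map (fun k => u (i + k))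

/-- `w` is a factor of the bi-infinite word `u` -/
def IsFactor (u : ℤ → A) (w : List A) : Prop :=
  ∃ i : ℤ, w = factorAt u i w.length

/-- the bi-infinite word `u` is balanced on the word `v` -/
def BalancedOn [DecidableEq A] (u : ℤ → A) (v : List A) : Prop :=
  ∃ C : ℕ, ∀ w w' : List A, IsFactor u w → IsFactor u w' → w.length = w'.length →
    ((occ v w : ℤ) - (occ v w' : ℤ)).natAbs ≤ C

/-- the shift map on bi-infinite words -/
def shift (x : ℤ → A) : ℤ → A := fun n => x (n + 1)

/-- cylinder of points spelling `v` at coordinates `0,…,|v|-1` -/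
def Cyl (v : List A) : Set (ℤ → A) := {x | factorAt x 0 v.length = v}

/-- the language of a set of bi-infinite words -/
def Lang (X : Set (ℤ → A)) : Set (List A) := {w | ∃ x ∈ X, IsFactor x w}

/-- a subshift is balanced on the word `v` -/
def SubshiftBalancedOn [DecidableEq A] (X : Set (ℤ → A)) (v : List A) : Prop :=
  ∃ C : ℕ, ∀ w w' : List A, w ∈ Lang X → w' ∈ Lang X → w.length = w'.length →
    ((occ v w : ℤ) - (occ v w' : ℤ)).natAbs ≤ C

/-- a subshift: a nonempty closed shift-invariant set of bi-infinite words -/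
structure IsSubshift [TopologicalSpace A] (X : Set (ℤ → A)) : Prop where
  nonempty : X.Nonempty
  closed : IsClosed X
  inv : shift '' X = X

/-- a minimal subshift -/
def IsMinimalSubshift [TopologicalSpace A] (X : Set (ℤ → A)) : Prop :=
  IsSubshift X ∧
    ∀ Y : Set (ℤ → A), Y ⊆ X → IsClosed Y → shift '' Y = Y → Y.Nonempty → Y = X

/-- a substitution applied to a finite word -/
def substW (σ : A → List A) (w : List A) : List A := w.flatMap σ

/-- iterates `σ^n` applied to a finite word -/
def substIter (σ : A → List A) (n : ℕ) (w : List A) : List A := (substW σ)^[n] w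

/-- a primitive (non-erasing) substitution -/
def IsPrimitive (σ : A → List A) : Prop :=
  (∀ a, σ a ≠ []) ∧ ∃ n : ℕ, ∀ a b : A, a ∈ substIter σ n [b]

/-- the subshift generated by the substitution `σ` -/
def Xsub (σ : A → List A) : Set (ℤ → A) :=
  {x | ∀ w : List A, IsFactor x w → ∃ (a : A) (n : ℕ), w <:+: substIter σ n [a]}

/-- a substitution applied to a bi-infinite word (the image of position 0 starts at 0) -/
def substPoint [Inhabited A] (σ : A → List A) (x : ℤ → A) : ℤ → A := fun n =>
  if 0 ≤ n then
    (substW σ ((List.range (n.toNat + 1)).map (fun i => x (i : ℤ)))).getD n.toNat default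
  else
    (((List.range ((-n - 1).toNat + 1)).map (fun i => x (-(i : ℤ) - 1))).flatMap
      (fun a => (σ a).reverse)).getD (-n - 1).toNat default

end Balance

namespace Balance

/-- the period-doubling (Toeplitz) substitution `0 ↦ 01`, `1 ↦ 00` on the alphabet `Bool` -/
def sigmaT : Bool → List Bool := fun b => if b then [false, false] else [false, true]



/-! ### substitution basics -/

lemma substW_append (σ : A → List A) (u v : List A) :
    substW σ (u ++ v) = substW σ u ++ substW σ v := List.flatMap_append ..

lemma substIter_append (σ : A → List A) (n : ℕ) (u v : List A) :
    substIter σ n (u ++ v) = substIter σ n u ++ substIter σ n v := by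
  induction n generalizing u v with
  | zero => rfl
  | succ n ih =>
    simp only [substIter, Function.iterate_succ_apply] at *
    rw [substW_append, ih]

lemma substIter_succ' (σ : A → List A) (n : ℕ) (w : List A) :
    substIter σ (n+1) w = substW σ (substIter σ n w) :=
  Function.iterate_succ_apply' ..

lemma substW_infix (σ : A → List A) {u v : List A} (h : u <:+: v) :
    substW σ u <:+: substW σ v := by
  obtain ⟨s, t, rfl⟩ := h
  exact ⟨substW σ s, substW σ t, by rw [substW_append, substW_append]⟩

lemma substIter_infix (σ : A → List A) (n : ℕ) {u v : List A} (h : u <:+: v) :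
    substIter σ n u <:+: substIter σ n v := by
  induction n with
  | zero => exact h
  | succ n ih => rw [substIter_succ', substIter_succ']; exact substW_infix σ ih

/-! ### the words Y n = σ^n(0) -/

def Y (n : ℕ) : List Bool := substIter sigmaT n [false]

lemma Y_succ (n : ℕ) : Y (n+1) = substW sigmaT (Y n) := substIter_succ' ..

lemma length_sigmaT (b : Bool) : (sigmaT b).length = 2 := by cases b <;> rfl

lemma length_substW (w : List Bool) : (substW sigmaT w).length = 2 * w.length := by
  induction w with
  | nil => rfl
  | cons b t ih =>
    simp only [substW, List.flatMap_cons] at *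
    simp [ih, length_sigmaT]; ring

lemma length_Y (n : ℕ) : (Y n).length = 2 ^ n := by
  induction n with
  | zero => rfl
  | succ n ih => rw [Y_succ, length_substW, ih, pow_succ]; ring

lemma count_true_substW (w : List Bool) :
    (substW sigmaT w).count true + w.count true = w.length := by
  induction w with
  | nil => rfl
  | cons b t ih =>
    simp only [substW, List.flatMap_cons, List.count_append, List.count_cons,
      List.length_cons] at *
    cases b <;> simp [sigmaT] <;> omega

lemma count_false_eq (w : List Bool) : w.count false + w.count true = w.length := by
  induction w with
  | nil => rfl
  | cons b t ih => cases b <;> simp [List.count_cons] <;> omega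

/-! ### prefix and suffix structure -/

lemma Y_prefix_succ (n : ℕ) : Y n <+: Y (n+1) := by
  induction n with
  | zero => exact ⟨[true], rfl⟩
  | succ n ih =>
    rw [Y_succ, Y_succ (n+1)]
    obtain ⟨t, ht⟩ := ih
    exact ⟨substW sigmaT t, by rw [← substW_append, ht]⟩

lemma Y_prefix {n m : ℕ} (h : n ≤ m) : Y n <+: Y m := by
  induction m with
  | zero => simp_all
  | succ m ih =>
    rcases Nat.lt_or_ge n (m+1) with h' | h'
    · exact (ih (by omega)).trans (Y_prefix_succ m)
    · have : n = m + 1 := by omega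
      subst this; exact List.prefix_rfl

lemma Y_suffix_two (m : ℕ) : Y (2*m) <:+ Y (2*m+2) := by
  induction m with
  | zero => exact ⟨[false, true, false], by decide⟩
  | succ m ih =>
    have h1 : Y (2*(m+1)) = substW sigmaT (substW sigmaT (Y (2*m))) := by
      have : 2*(m+1) = (2*m+1)+1 := by ring
      rw [this, Y_succ, Y_succ]
    have h2 : Y (2*(m+1)+2) = substW sigmaT (substW sigmaT (Y (2*m+2))) := by
      have : 2*(m+1)+2 = (2*m+2+1)+1 := by ring
      rw [this, Y_succ, Y_succ]
    obtain ⟨t, ht⟩ := ih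
    exact h1 ▸ h2 ▸ ⟨substW sigmaT (substW sigmaT t), by
      rw [← substW_append, ← substW_append, ht]⟩

lemma Y_suffix {n m : ℕ} (h : n ≤ m) : Y (2*n) <:+ Y (2*m) := by
  induction m with
  | zero => simp_all
  | succ m ih =>
    rcases Nat.lt_or_ge n (m+1) with h' | h'
    · have := (ih (by omega)).trans (Y_suffix_two m)
      simpa [Nat.mul_succ] using this
    · have : n = m + 1 := by omega
      subst this; exact List.suffix_rfl



/-! take lemmas -/

lemma take_substW (w : List Bool) (N : ℕ) (h : N ≤ w.length) :
    (substW sigmaT w).take (2*N) = substW sigmaT (w.take N) := by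
  induction w generalizing N with
  | nil => simp_all [substW]
  | cons b t ih =>
    cases N with
    | zero => simp [substW]
    | succ k =>
      have h2 : 2*(k+1) = 2 + 2*k := by ring
      simp only [substW, List.flatMap_cons] at *
      cases b <;>
        simp only [sigmaT, if_true, if_false, h2, List.take_cons, List.take_append,
          List.take_succ_cons] <;>
      · simp only [List.length_cons] at h
        simp [List.take_cons, ih k (by omega), sigmaT]

lemma take_substW_odd (w : List Bool) (N : ℕ) (h : N < w.length) :
    (substW sigmaT w).take (2*N+1) = substW sigmaT (w.take N) ++ [false] := by
  induction w generalizing N with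
  | nil => simp_all [substW]
  | cons b t ih =>
    cases N with
    | zero =>
      simp only [substW, List.flatMap_cons]
      cases b <;> simp [sigmaT]
    | succ k =>
      have h2 : 2*(k+1)+1 = 2 + (2*k+1) := by ring
      simp only [substW, List.flatMap_cons] at *
      cases b <;>
        simp only [sigmaT, if_true, if_false, h2, List.take_cons, List.take_append,
          List.take_succ_cons] <;>
      · simp only [List.length_cons] at h
        simp [List.take_cons, ih k (by omega), sigmaT]


/-! ### counting ones in prefixes of the fixed point -/

/-- number of `true`s among the first `N` letters of the period-doubling word -/
def cnt (N : ℕ) : ℕ := (List.take N (Y N)).count true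

lemma take_Y_stable {n m N : ℕ} (hnm : n ≤ m) (hN : N ≤ 2^n) :
    (Y m).take N = (Y n).take N := by
  obtain ⟨t, ht⟩ := Y_prefix hnm
  rw [← ht, List.take_append]
  have : N - (Y n).length = 0 := by rw [length_Y]; omega
  simp [this]

lemma cnt_eq (n N : ℕ) (hN : N ≤ 2^n) : cnt N = ((Y n).take N).count true := by
  unfold cnt
  rcases Nat.le_total N n with h | h
  · rw [take_Y_stable h (Nat.le_of_lt ((Nat.lt_two_pow_self (n := N))))]
  · rw [take_Y_stable (n := n) (m := N) h hN]

lemma cnt_even (N : ℕ) : cnt (2*N) + cnt N = N := by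
  have hlen : N ≤ (Y N).length := by rw [length_Y]; exact Nat.le_of_lt ((Nat.lt_two_pow_self (n := N)))
  have h1 : cnt (2*N) = ((Y (N+1)).take (2*N)).count true := by
    apply cnt_eq; rw [pow_succ]; have := (Nat.lt_two_pow_self (n := N)); omega
  rw [h1, Y_succ, take_substW _ _ hlen]
  have := count_true_substW ((Y N).take N)
  have hl : ((Y N).take N).length = N := by
    have := (Nat.lt_two_pow_self (n := N))
    rw [List.length_take, length_Y]; omega
  rw [hl] at this
  unfold cnt
  exact this

lemma cnt_odd (N : ℕ) : cnt (2*N+1) = cnt (2*N) := by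
  have hlen : N < (Y N).length := by rw [length_Y]; exact (Nat.lt_two_pow_self (n := N))
  have h1 : cnt (2*N+1) = ((Y (N+1)).take (2*N+1)).count true := by
    apply cnt_eq; rw [pow_succ]; have := (Nat.lt_two_pow_self (n := N)); omega
  have h2 : cnt (2*N) = ((Y (N+1)).take (2*N)).count true := by
    apply cnt_eq; rw [pow_succ]; have := (Nat.lt_two_pow_self (n := N)); omega
  rw [h1, h2, Y_succ, take_substW _ _ (Nat.le_of_lt hlen), take_substW_odd _ _ hlen]
  simp

/-- the length sequence `J m` (binary `(10)^m`) -/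
def J : ℕ → ℕ
  | 0 => 0
  | m+1 => 4 * J m + 2

lemma cnt_J (m : ℕ) : 3 * cnt (J m) = J m + m := by
  induction m with
  | zero => simp [J, cnt]
  | succ m ih =>
    have e1 : J (m+1) = 2*(2*(J m) + 1) := by rw [J]; ring
    have e2 := cnt_even (2*(J m)+1)
    have e3 := cnt_odd (J m)
    have e4 := cnt_even (J m)
    rw [e1]
    omega

/-! ### the two-sided fixed point of `σ_T²` -/

/-- a two-sided fixed point of the square of the period-doubling substitution -/
def pd : ℤ → Bool := fun n =>
  if 0 ≤ n then (Y (n.toNat + 1)).getD n.toNat false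
  else (Y (2*((-n - 1).toNat + 1))).reverse.getD (-n - 1).toNat false

lemma getD_Y_stable {n m k : ℕ} (hnm : n ≤ m) (hk : k < 2^n) :
    (Y m).getD k false = (Y n).getD k false := by
  obtain ⟨t, ht⟩ := Y_prefix hnm
  rw [← ht, List.getD_append]
  rw [length_Y]; exact hk

lemma getD_Y_rev_stable {n m k : ℕ} (hnm : n ≤ m) (hk : k < 4^n) :
    (Y (2*m)).reverse.getD k false = (Y (2*n)).reverse.getD k false := by
  obtain ⟨t, ht⟩ := List.reverse_prefix.2 (Y_suffix hnm)
  rw [← ht, List.getD_append]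
  rw [List.length_reverse, length_Y, pow_mul]
  norm_num
  exact hk

lemma pd_nonneg (k n : ℕ) (hk : k < 2^n) : pd k = (Y n).getD k false := by
  have h0 : (0:ℤ) ≤ (k:ℤ) := Int.ofNat_nonneg k
  have ht : ((k:ℤ)).toNat = k := rfl
  rw [pd]; rw [if_pos h0, ht]
  have hk1 : k < 2^(k+1) := lt_of_lt_of_le ((Nat.lt_two_pow_self (n := k))) (Nat.pow_le_pow_right (by norm_num) (by omega))
  rcases Nat.le_total (k+1) n with h | h
  · rw [getD_Y_stable h hk1]
  · rw [getD_Y_stable (n := n) (m := k+1) h hk]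

lemma pd_neg (k m : ℕ) (hk : k < 4^m) :
    pd (-((k:ℤ)+1)) = (Y (2*m)).reverse.getD k false := by
  have h0 : ¬ (0:ℤ) ≤ -((k:ℤ)+1) := by omega
  have ht : (-(-((k:ℤ)+1)) - 1).toNat = k := by omega
  rw [pd, if_neg h0, ht]
  have hk1 : k < 4^(k+1) := lt_of_lt_of_le (Nat.lt_pow_self (n := k) (a := 4) (by norm_num))
    (Nat.pow_le_pow_right (by norm_num) (by omega))
  rcases Nat.le_total (k+1) m with h | h
  · rw [getD_Y_rev_stable h hk1]
  · rw [getD_Y_rev_stable (n := m) (m := k+1) h hk]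

/-! ### factor lemmas -/

lemma factorAt_eq (u : ℤ → A) (i : ℤ) (n : ℕ) :
    factorAt u i n = (List.range n).map (fun k : ℕ => u (i + (k:ℤ))) := by
  unfold factorAt; simp only [List.bind_eq_flatMap, List.pure_def]
  rw [← List.map_eq_flatMap (f := fun a : ℕ => (a:ℤ)) (l := List.range n), List.map_map]
  rfl

lemma length_factorAt (u : ℤ → A) (i : ℤ) (n : ℕ) : (factorAt u i n).length = n := by
  rw [factorAt_eq]; simp

lemma factorAt_add (u : ℤ → A) (i : ℤ) (m n : ℕ) :
    factorAt u i (m + n) = factorAt u i m ++ factorAt u (i + m) n := by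
  rw [factorAt_eq, factorAt_eq, factorAt_eq]
  rw [List.range_add, List.map_append, List.map_map]
  congr 1
  apply List.map_congr_left
  intro k _
  simp only [Function.comp_apply]
  congr 1
  push_cast
  ring

lemma isFactor_of_infix {u : ℤ → A} {w v : List A} (hw : IsFactor u w) (hv : v <:+: w) :
    IsFactor u v := by
  obtain ⟨i, hi⟩ := hw
  obtain ⟨s, t, hst⟩ := hv
  have hlen : w.length = s.length + (v.length + t.length) := by rw [← hst]; simp
  rw [hlen, factorAt_add, factorAt_add] at hi
  rw [← hst, List.append_assoc] at hi
  obtain ⟨h1, h2⟩ := List.append_inj hi (by rw [length_factorAt])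
  obtain ⟨h3, _⟩ := List.append_inj h2 (by rw [length_factorAt])
  exact ⟨i + s.length, h3⟩

lemma lang_of_infix {X : Set (ℤ → A)} {w v : List A} (hw : w ∈ Lang X) (hv : v <:+: w) :
    v ∈ Lang X := by
  obtain ⟨x, hx, hf⟩ := hw
  exact ⟨x, hx, isFactor_of_infix hf hv⟩

/-! ### factors of `pd` -/

lemma factorAt_pd_zero {N n : ℕ} (h : N ≤ 2^n) : factorAt pd 0 N = (Y n).take N := by
  have hlen : N ≤ (Y n).length := by rw [length_Y]; exact h
  rw [factorAt_eq]
  apply List.ext_getElem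
  · simp; omega
  intro j h1 h2
  simp only [List.length_map, List.length_range] at h1
  simp only [List.getElem_map, List.getElem_range, List.getElem_take]
  rw [zero_add]
  rw [pd_nonneg j n (by omega), List.getD_eq_getElem _ _ (by omega)]

lemma factorAt_pd_neg (m : ℕ) : factorAt pd (-(4^m : ℕ)) (4^m) = Y (2*m) := by
  have hlen : (Y (2*m)).length = 4^m := by rw [length_Y, pow_mul]; norm_num
  rw [factorAt_eq]
  apply List.ext_getElem
  · simp; omega
  intro j h1 h2
  simp only [List.length_map, List.length_range] at h1
  simp only [List.getElem_map, List.getElem_range]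
  have harg : (-(4^m : ℕ) : ℤ) + j = -((((4^m - 1 - j : ℕ)) : ℤ) + 1) := by
    omega
  have hrevlen : 4 ^ m - 1 - j < (Y (2*m)).reverse.length := by
    rw [List.length_reverse]; omega
  rw [harg, pd_neg _ m (by omega), List.getD_eq_getElem _ _ hrevlen, List.getElem_reverse]
  congr 1
  rw [List.length_reverse] at hrevlen
  omega

lemma Y_two : Y 2 = [false, true, false, false] := by decide

lemma pd_mem : pd ∈ Xsub sigmaT := by
  intro w hw
  obtain ⟨i, hi⟩ := hw
  set L := w.length with hL
  set m := i.natAbs + L with hm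
  have h4 : i.natAbs + L < 4^m := Nat.lt_pow_self (n := m) (by norm_num)
  have hNa : ((4^m : ℕ) : ℤ) = ((4:ℤ))^m := by push_cast; ring
  have hi1 : -((4^m : ℕ) : ℤ) ≤ i := by omega
  have hi2 : i + L ≤ ((4^m : ℕ) : ℤ) := by omega
  set a := (i + (4^m : ℕ)).toNat with ha'
  set b := (((4^m : ℕ) : ℤ) - i - L).toNat with hb'
  have ha : (a:ℤ) = i + (4^m : ℕ) := Int.toNat_of_nonneg (by omega)
  have hb : (b:ℤ) = ((4^m : ℕ) : ℤ) - i - L := Int.toNat_of_nonneg (by omega)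
  have hsum : a + (L + b) = 4^m + 4^m := by omega
  have e1 : (-((4^m : ℕ) : ℤ)) + a = i := by omega
  have hsplit : factorAt pd (-((4^m : ℕ) : ℤ)) (a + (L + b)) =
      factorAt pd (-((4^m : ℕ) : ℤ)) a ++ (factorAt pd i L ++ factorAt pd (i + L) b) := by
    rw [factorAt_add, e1, factorAt_add]
  have htot : factorAt pd (-((4^m : ℕ) : ℤ)) (4^m + 4^m) = Y (2*m) ++ Y (2*m) := by
    have e2 : (-((4^m : ℕ) : ℤ)) + (4^m : ℕ) = 0 := by omega
    have e3 : (Y (2*m)).take (4^m) = Y (2*m) := by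
      apply List.take_of_length_le
      rw [length_Y, pow_mul]; norm_num
    rw [factorAt_add, e2, factorAt_pd_neg, factorAt_pd_zero (n := 2*m) (by rw [pow_mul]; norm_num), e3]
  have hinf : w <:+: Y (2*m) ++ Y (2*m) := by
    refine ⟨factorAt pd (-((4^m : ℕ) : ℤ)) a, factorAt pd (i + L) b, ?_⟩
    rw [List.append_assoc, hi, ← hsplit, hsum, htot]
  have hYY : Y (2*m) ++ Y (2*m) = substIter sigmaT (2*m) [false, false] := by
    have : ([false, false] : List Bool) = [false] ++ [false] := rfl
    rw [this, substIter_append]; rfl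
  have h00 : ([false, false] : List Bool) <:+: Y 2 := by rw [Y_two]; decide
  refine ⟨false, 2*m + 2, hinf.trans ?_⟩
  rw [hYY]
  have := substIter_infix sigmaT (2*m) h00
  have hiter : substIter sigmaT (2*m) (Y 2) = substIter sigmaT (2*m + 2) [false] :=
    (Function.iterate_add_apply _ (2*m) 2 _).symm
  rw [← hiter]
  exact this

lemma lang_take_drop {i L n : ℕ} (h : i + L ≤ 2^n) :
    ((Y n).drop i).take L ∈ Lang (Xsub sigmaT) := by
  have hlen : i + L ≤ (Y n).length := by rw [length_Y]; exact h
  have hsplit : factorAt pd 0 (i + L) = factorAt pd 0 i ++ factorAt pd i L := by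
    have := factorAt_add pd 0 i L
    simpa using this
  have h1 : factorAt pd 0 (i+L) = (Y n).take (i+L) := factorAt_pd_zero h
  have h2 : factorAt pd 0 i = (Y n).take i := factorAt_pd_zero (by omega)
  have hlt : ((Y n).take i).length = i := by rw [List.length_take]; omega
  have e : (Y n).take i ++ factorAt pd i L = (Y n).take (i+L) := by
    rw [← h1, hsplit, h2]
  have e2 : factorAt pd i L = List.drop i ((Y n).take (i + L)) := by
    rw [← e, List.drop_left' hlt]
  have key : factorAt pd i L = ((Y n).drop i).take L := by
    rw [e2, List.drop_take]
    have : i + L - i = L := by omega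
    rw [this]
  have hlen2 : (((Y n).drop i).take L).length = L := by
    rw [List.length_take, List.length_drop, length_Y]; omega
  refine ⟨pd, pd_mem, i, ?_⟩
  rw [hlen2]
  exact key.symm

/-! ### occurrence counting lemmas -/

lemma occ_countP [DecidableEq A] (v w : List A) :
    occ v w = (List.range (w.length + 1)).countP (fun i => decide (v <+: w.drop i)) :=
  List.countP_eq_length_filter.symm

lemma singleton_prefix_iff (a b : A) (t : List A) : [a] <+: (b :: t) ↔ a = b := by
  constructor
  · rintro ⟨r, hr⟩
    exact (List.cons_eq_cons.mp hr).1
  · rintro rfl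
    exact ⟨t, rfl⟩

lemma occ_singleton [DecidableEq A] (a : A) (w : List A) : occ [a] w = w.count a := by
  induction w with
  | nil => simp [occ]
  | cons b t ih =>
    rw [occ_countP] at *
    simp only [List.length_cons]
    rw [List.range_succ_eq_map, List.countP_cons, List.countP_map]
    have h1 : (List.countP ((fun i => decide ([a] <+: (b :: t).drop i)) ∘ Nat.succ) (List.range (t.length + 1)))
        = List.countP (fun i => decide ([a] <+: t.drop i)) (List.range (t.length + 1)) := by
      apply List.countP_congr
      intro i _
      simp [Function.comp, List.drop_succ_cons]
    rw [h1, ih, List.count_cons, List.drop_zero]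
    by_cases hab : a = b
    · subst hab; simp [singleton_prefix_iff]
    · rw [if_neg (by simpa [singleton_prefix_iff] using hab),
        if_neg (by simpa [beq_iff_eq] using Ne.symm hab)]

lemma occ_ne_zero_infix [DecidableEq A] {v w : List A} (h : occ v w ≠ 0) : v <:+: w := by
  rw [occ_countP] at h
  obtain ⟨i, hi, hp⟩ := List.countP_pos_iff.mp (Nat.pos_of_ne_zero h) -- maybe name differs
  exact List.IsInfix.trans (List.IsPrefix.isInfix (of_decide_eq_true hp)) (List.drop_suffix i w).isInfix


lemma countP_or_disjoint (l : List ℕ) (p q : ℕ → Bool)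
    (h : ∀ a ∈ l, ¬(p a = true ∧ q a = true)) :
    l.countP (fun a => p a || q a) = l.countP p + l.countP q := by
  induction l with
  | nil => rfl
  | cons b t ih =>
    rw [List.countP_cons, List.countP_cons, List.countP_cons,
      ih (fun a ha => h a (List.mem_cons_of_mem b ha))]
    have := h b (List.mem_cons_self (a := b) (l := t))
    cases hp : p b <;> cases hq : q b <;> simp_all <;> omega

lemma count_range_eq (k N : ℕ) :
    (List.range N).countP (fun i => i == k) = if k < N then 1 else 0 := by
  induction N with
  | zero => simp
  | succ N ih =>
    rw [List.range_succ, List.countP_append, ih]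
    by_cases h : k < N
    · have : k < N + 1 := by omega
      simp [h, this]
      intro hh; omega
    · by_cases h2 : k = N
      · subst h2; simp [h]
      · have : ¬ (k < N + 1) := by omega
        simp [h, this, Ne.symm h2]

/-- prefix extension trichotomy -/
lemma prefix_iff_bool (v u : List Bool) :
    v <+: u ↔ ((v ++ [false] <+: u) ∨ (v ++ [true] <+: u) ∨ u = v) := by
  constructor
  · rintro ⟨r, rfl⟩
    cases r with
    | nil => right; right; simp
    | cons c r' =>
      cases c
      · left; exact ⟨r', by simp⟩
      · right; left; exact ⟨r', by simp⟩
  · rintro (h | h | rfl)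
    · exact (List.prefix_append v [false]).trans h
    · exact (List.prefix_append v [true]).trans h
    · exact List.prefix_rfl

lemma countP_congr' {α : Type*} {l : List α} {p q : α → Bool} (h : ∀ a ∈ l, p a = q a) :
    l.countP p = l.countP q :=
  List.countP_congr (fun a ha => by rw [h a ha])

lemma occ_split (v w : List Bool) :
    occ v w = occ (v ++ [false]) w + occ (v ++ [true]) w + (if v <:+ w then 1 else 0) := by
  have hlen : ∀ u : List Bool, (v ++ [false] <+: u) → ¬ (v ++ [true] <+: u) := by
    intro u h0 h1
    have := List.prefix_of_prefix_length_le h0 h1 (by simp)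
    have := this.eq_of_length (by simp)
    simpa using List.append_inj_right this (by simp)
  rw [occ_countP, occ_countP, occ_countP]
  have step1 : ∀ i ∈ List.range (w.length + 1),
      (decide (v <+: w.drop i)) =
      ((decide (v ++ [false] <+: w.drop i) || decide (v ++ [true] <+: w.drop i)) ||
        decide (w.drop i = v)) := by
    intro i _
    by_cases h : v <+: w.drop i
    · simp only [decide_eq_true h, Bool.true_eq]
      rcases (prefix_iff_bool v (w.drop i)).mp h with h' | h' | h' <;> simp [h']
    · have h0 : ¬ (v ++ [false] <+: w.drop i) := fun hh => h ((prefix_iff_bool v _).mpr (Or.inl hh))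
      have h1 : ¬ (v ++ [true] <+: w.drop i) := fun hh => h ((prefix_iff_bool v _).mpr (Or.inr (Or.inl hh)))
      have h2 : ¬ (w.drop i = v) := fun hh => h ((prefix_iff_bool v _).mpr (Or.inr (Or.inr hh)))
      simp [h, h0, h1, h2]
  rw [countP_congr' step1]
  rw [countP_or_disjoint _ _ _ (by
    intro i _ ⟨hor, hsuf⟩
    have hor' := Bool.or_eq_true_iff.mp hor
    have hv : w.drop i = v := of_decide_eq_true hsuf
    rcases hor' with h' | h'
    · have := of_decide_eq_true h'
      have := this.length_le
      simp [hv] at this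
    · have := of_decide_eq_true h'
      have := this.length_le
      simp [hv] at this)]
  rw [countP_or_disjoint _ _ _ (by
    intro i _ ⟨h0, h1⟩
    exact hlen _ (of_decide_eq_true h0) (of_decide_eq_true h1))]
  congr 1
  -- remaining: countP (drop i w = v) = if v <:+ w then 1 else 0
  have huniq : ∀ i ∈ List.range (w.length + 1),
      (decide (w.drop i = v)) = ((i == w.length - v.length) && decide (v <:+ w)) := by
    intro i hi
    rw [List.mem_range] at hi
    by_cases h : w.drop i = v
    · have hle : i ≤ w.length := by omega
      have hl : v.length = w.length - i := by rw [← h, List.length_drop]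
      have hi2 : i = w.length - v.length := by omega
      have hsuf : v <:+ w := h ▸ List.drop_suffix i w
      simp [hi2, hsuf, hi2 ▸ h]
    · simp only [decide_eq_false h, Bool.false_eq]
      by_cases hsuf : v <:+ w
      · have : i ≠ w.length - v.length := by
          intro rfl_eq
          apply h
          obtain ⟨s, hs⟩ := hsuf
          have : s.length = w.length - v.length := by
            have := congrArg List.length hs
            simp at this
            omega
          rw [rfl_eq, ← this, ← hs, List.drop_left]
        simp [this]
      · simp [hsuf]
  rw [countP_congr' huniq]
  by_cases hsuf : v <:+ w
  · rw [if_pos hsuf]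
    have : ∀ i ∈ List.range (w.length+1), ((i == w.length - v.length) && decide (v <:+ w)) = (i == w.length - v.length) := by
      intro i _; simp [hsuf]
    rw [countP_congr' this, count_range_eq]
    have : v.length ≤ w.length := hsuf.length_le
    rw [if_pos (by omega)]
  · rw [if_neg hsuf]
    apply List.countP_eq_zero.mpr
    intro i _
    simp [hsuf]


/-! ### part 1: unbalancedness on letters -/

lemma J_lt (m : ℕ) : J m < 4^m := by
  induction m with
  | zero => simp [J]
  | succ m ih =>
    have : (4:ℕ)^(m+1) = 4 * 4^m := by ring
    rw [J, this]
    omega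

lemma part1 (a : Bool) : ¬ SubshiftBalancedOn (Xsub sigmaT) [a] := by
  rintro ⟨C, hC⟩
  set m := C + 1 with hm
  set n := 2*m + 1 with hn
  have hpow : (2:ℕ)^n = 2 * 4^m := by rw [hn, pow_succ, pow_mul]; ring
  have hJ : J m < 4^m := J_lt m
  have hJn : J m + J m ≤ 2^n := by omega
  set w : List Bool := (Y n).take (J m) with hw
  set w' : List Bool := ((Y n).drop (J m)).take (J m) with hw'
  have hwlang : w ∈ Lang (Xsub sigmaT) := by
    have := lang_take_drop (i := 0) (L := J m) (n := n) (by omega)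
    simpa using this
  have hw'lang : w' ∈ Lang (Xsub sigmaT) := lang_take_drop (by omega)
  have hYlen : (Y n).length = 2^n := length_Y n
  have hlw : w.length = J m := by rw [hw, List.length_take]; omega
  have hlw' : w'.length = J m := by
    rw [hw', List.length_take, List.length_drop]; omega
  -- counts
  have hcw : w.count true = cnt (J m) := (cnt_eq n (J m) (by omega)).symm
  have htake2 : (Y n).take (J m + J m) = w ++ w' := List.take_add (l := Y n) (i := J m) (j := J m)
  have hcww' : cnt (2 * J m) = w.count true + w'.count true := by
    have h2 : cnt (2 * J m) = ((Y n).take (2 * J m)).count true := cnt_eq n _ (by omega)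
    have : 2 * J m = J m + J m := by ring
    rw [h2, this, htake2, List.count_append]
  have he := cnt_even (J m)
  have hj := cnt_J m
  have hfw := count_false_eq w
  have hfw' := count_false_eq w'
  have hb := hC w w' hwlang hw'lang (by omega)
  rw [occ_singleton, occ_singleton] at hb
  cases a <;> omega

/-! ### part 2: reduction from length `n` to letters -/

def BalAll (n : ℕ) : Prop :=
  ∀ v ∈ Lang (Xsub sigmaT), v.length = n → SubshiftBalancedOn (Xsub sigmaT) v

lemma bal_of {l : ℕ} (H : BalAll (l+1)) (u : List Bool) (hu : u.length = l+1) :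
    ∃ C : ℕ, ∀ w w' : List Bool, w ∈ Lang (Xsub sigmaT) → w' ∈ Lang (Xsub sigmaT) →
      w.length = w'.length → ((occ u w : ℤ) - (occ u w' : ℤ)).natAbs ≤ C := by
  by_cases hmem : u ∈ Lang (Xsub sigmaT)
  · exact H u hmem hu
  · refine ⟨0, fun w w' hw hw' _ => ?_⟩
    have hzero : ∀ z ∈ Lang (Xsub sigmaT), occ u z = 0 := by
      intro z hz
      by_contra hne
      exact hmem (lang_of_infix hz (occ_ne_zero_infix hne))
    rw [hzero w hw, hzero w' hw']
    simp

lemma step_down {l : ℕ} (H : BalAll (l+1)) : BalAll l := by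
  intro v _ hlen
  obtain ⟨C0, h0⟩ := bal_of H (v ++ [false]) (by simp [hlen])
  obtain ⟨C1, h1⟩ := bal_of H (v ++ [true]) (by simp [hlen])
  refine ⟨C0 + C1 + 1, fun w w' hw hw' hl => ?_⟩
  have e := occ_split v w
  have e' := occ_split v w'
  have b0 := h0 w w' hw hw' hl
  have b1 := h1 w w' hw hw' hl
  have s1 : (if v <:+ w then 1 else 0) ≤ 1 := by split <;> omega
  have s2 : (if v <:+ w' then 1 else 0) ≤ 1 := by split <;> omega
  omega

lemma descend : ∀ k, BalAll (k+1) → BalAll 1 := by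
  intro k
  induction k with
  | zero => exact id
  | succ k ih => exact fun H => ih (step_down H)

lemma true_mem_lang : [true] ∈ Lang (Xsub sigmaT) := by
  have := lang_take_drop (i := 1) (L := 1) (n := 1) (by norm_num)
  have hY1 : ((Y 1).drop 1).take 1 = [true] := by decide
  rwa [hY1] at this

/-- The period-doubling subshift is not balanced on any letter, and hence for every
length `n ≥ 1` it is not balanced on all factors of length `n`. -/
theorem period_doubling_unbalanced :
    (∀ a : Bool, ¬ SubshiftBalancedOn (Xsub sigmaT) [a]) ∧
    (∀ n : ℕ, 1 ≤ n →
      ¬ (∀ v ∈ Lang (Xsub sigmaT), v.length = n → SubshiftBalancedOn (Xsub sigmaT) v)) := by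
  constructor
  · exact part1
  · intro n hn Hall
    have Hn : BalAll n := Hall
    have H1 : BalAll 1 := by
      obtain ⟨k, rfl⟩ : ∃ k, n = k + 1 := ⟨n - 1, by omega⟩
      exact descend k Hn
    exact part1 true (H1 [true] true_mem_lang rfl)

end Balance
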